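/- For every a ∈ ℂ∖{0}, the matrix M(−a⁻¹, a, −a⁻¹, a) has characteristic polynomial (λ−a)²(λ−a⁻²), and the matrix M(−a⁻¹, a, −a⁻¹, a) − a·I has rank 1 (equivalently, the eigenspace of the eigenvalue a is two-dimensional). -/

import Mathlib

open Matrix Polynomial

/-- The Noumi–Yamada topological monodromy matrix `M(x₁,x₂,x₃,x₄)`. -/
def NYmonodromy (x₁ x₂ x₃ x₄ : ℂ) : Matrix (Fin 3) (Fin 3) ℂ :=
  !![x₄, 0, x₁ * x₄ + 1;
     1, 0, x₁;
     x₃, 1, x₁ * x₃ + x₂]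

/-- For `a ≠ 0`, the matrix `M(−a⁻¹, a, −a⁻¹, a)` has characteristic polynomial
`(λ−a)²(λ−a⁻²)` and `M(−a⁻¹, a, −a⁻¹, a) − a·I` has rank `1` (the eigenspace of
the eigenvalue `a` is two-dimensional). -/
theorem stmt_9 (a : ℂ) (ha : a ≠ 0) :
    (NYmonodromy (-a⁻¹) a (-a⁻¹) a).charpoly = (X - C a) ^ 2 * (X - C ((a ^ 2)⁻¹)) ∧
    (NYmonodromy (-a⁻¹) a (-a⁻¹) a - a • (1 : Matrix (Fin 3) (Fin 3) ℂ)).rank = 1 := by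
  constructor
  · rw [Matrix.charpoly, Matrix.det_fin_three]
    simp [charmatrix_apply, NYmonodromy]
    have h : (C a : ℂ[X]) * C a⁻¹ = 1 := by rw [← C_mul, mul_inv_cancel₀ ha, C_1]
    rw [show ((a ^ 2)⁻¹ : ℂ) = a⁻¹ * a⁻¹ by rw [sq, mul_inv], C_mul]
    linear_combination ((1 : ℂ[X]) - (X - C a) * C a⁻¹ - X * C a⁻¹) * h
  · set B := NYmonodromy (-a⁻¹) a (-a⁻¹) a - a • (1 : Matrix (Fin 3) (Fin 3) ℂ) with hBdef
    have hB : B = vecMulVec ![0, 1, -a⁻¹] ![1, -a, -a⁻¹] := by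
      ext i j
      fin_cases i <;> fin_cases j <;>
        simp [hBdef, NYmonodromy, vecMulVec_apply, Matrix.one_apply, Matrix.smul_apply,
          mul_inv_cancel₀ ha, inv_mul_cancel₀ ha]
    have hle : B.rank ≤ 1 := by
      rw [hB, vecMulVec_eq (ι := Fin 1)]
      calc ((replicateCol (Fin 1) ![0,1,-a⁻¹] * replicateRow (Fin 1) ![1,-a,-a⁻¹]).rank)
          ≤ (replicateCol (Fin 1) ![0,1,-a⁻¹]).rank := rank_mul_le_left _ _
        _ ≤ Fintype.card (Fin 1) := rank_le_card_width _
        _ = 1 := by simp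
    have hpos : 0 < B.rank := by
      rw [Matrix.rank]
      rw [Module.finrank_pos_iff]
      refine ⟨⟨B.mulVecLin (Pi.single 1 1), LinearMap.mem_range_self _ _⟩, 0, ?_⟩
      intro hcon
      have h2 : B.mulVecLin (Pi.single 1 1) = 0 := congrArg Subtype.val hcon
      have h3 : B.mulVecLin (Pi.single 1 1) 2 = 1 := by
        simp [hB, mulVecLin, vecMulVec_apply, mulVec, dotProduct, Fin.sum_univ_three]
        exact inv_mul_cancel₀ ha
      rw [h2] at h3
      simp at h3
    omega
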